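/- Rational Fay identity: let f₀, …, f_{g−1} ∈ ℂ and let A, B, C, D ∈ ℂ satisfy A, B, C, D ∉ {q₀, …, q_{g−1}} and B, D ∉ {p₀, …, p_{g−1}}. Then (A−D)(C−B)·H((f_k σ_k(A)/σ_k(B))_k)·H((f_k σ_k(C)/σ_k(D))_k) + (A−B)(D−C)·H((f_k σ_k(A)/σ_k(D))_k)·H((f_k σ_k(C)/σ_k(B))_k) = (A−C)(D−B)·H((f_k)_k)·H((f_k σ_k(A)σ_k(C)/(σ_k(B)σ_k(D)))_k). -/

import Mathlib

open Matrix

section plucker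
variable {n : Type*} [DecidableEq n] [Fintype n] {R : Type*} [CommRing R]

lemma updateColumn_idem (M : Matrix n n R) (i : n) (c d : n → R) :
    (M.updateCol i c).updateCol i d = M.updateCol i d := by
  ext k l
  simp only [Matrix.updateCol_apply]
  split_ifs <;> rfl

lemma updateColumn_swap (M : Matrix n n R) (i₁ i₂ : n) (h12 : i₁ ≠ i₂) (b c d : n → R) :
    ((M.updateCol i₁ c).updateCol i₂ d).updateCol i₁ b
      = (M.updateCol i₁ b).updateCol i₂ d := by
  ext k l
  simp only [Matrix.updateCol_apply]
  split_ifs with h1 h2 <;> simp_all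

/-- Three-term Plücker relation for determinants with two varying columns. -/
lemma plucker (M : Matrix n n R) (i₁ i₂ : n) (h12 : i₁ ≠ i₂) (a b c d : n → R) :
    ((M.updateCol i₁ a).updateCol i₂ b).det * ((M.updateCol i₁ c).updateCol i₂ d).det
    = ((M.updateCol i₁ a).updateCol i₂ c).det * ((M.updateCol i₁ b).updateCol i₂ d).det
    + ((M.updateCol i₁ a).updateCol i₂ d).det * ((M.updateCol i₁ c).updateCol i₂ b).det := by
  classical
  set U := M.updateCol i₁ a with hU
  set W := (M.updateCol i₁ c).updateCol i₂ d with hW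
  have hsum : W *ᵥ (cramer W b) = ∑ j : n, (cramer W b) j • (fun i => W i j) := by
    ext i
    simp [Matrix.mulVec, dotProduct, Finset.sum_apply, mul_comm]
  have key : cramer U (W *ᵥ (cramer W b)) i₂ = cramer U (W.det • b) i₂ := by
    rw [Matrix.mulVec_cramer]
  rw [hsum, map_sum (cramer U)] at key
  have hsplit : (∑ j : n, cramer U ((cramer W b) j • (fun i => W i j))) i₂
      = (cramer W b i₁) * cramer U (fun i => W i i₁) i₂
        + (cramer W b i₂) * cramer U (fun i => W i i₂) i₂ := by
    rw [Finset.sum_apply]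
    rw [show (∑ j : n, cramer U ((cramer W b) j • (fun i => W i j)) i₂)
        = ∑ j : n, (cramer W b j) * cramer U (fun i => W i j) i₂ by
      refine Finset.sum_congr rfl fun j _ => ?_
      rw [(cramer U).map_smul]; simp [smul_eq_mul]]
    rw [← Finset.sum_subset (Finset.subset_univ ({i₁, i₂} : Finset n))]
    · rw [Finset.sum_pair h12]
    · intro j _ hj
      simp only [Finset.mem_insert, Finset.mem_singleton, not_or] at hj
      obtain ⟨hj1, hj2⟩ := hj
      have hz : cramer U (fun i => W i j) i₂ = 0 := by
        rw [cramer_apply]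
        apply Matrix.det_zero_of_column_eq (show i₂ ≠ j from fun h => hj2 h.symm)
        intro k
        simp [hU, hW, Matrix.updateCol_apply, hj1, hj2]
      rw [hz, mul_zero]
  rw [hsplit] at key
  have hWi₁ : (fun i => W i i₁) = c := by
    funext i
    rw [hW, Matrix.updateCol_ne h12, Matrix.updateCol_self]
  have hWi₂ : (fun i => W i i₂) = d := by
    funext i; rw [hW, Matrix.updateCol_self]
  rw [hWi₁, hWi₂] at key
  have e1 : cramer W b i₁ = ((M.updateCol i₁ b).updateCol i₂ d).det := by
    rw [cramer_apply, hW, updateColumn_swap M i₁ i₂ h12 b c d]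
  have e2 : cramer W b i₂ = ((M.updateCol i₁ c).updateCol i₂ b).det := by
    rw [cramer_apply, hW, updateColumn_idem]
  have e3 : ∀ x, cramer U x i₂ = ((M.updateCol i₁ a).updateCol i₂ x).det := by
    intro x; rw [cramer_apply, hU]
  have e4 : cramer U (W.det • b) i₂ = W.det * cramer U b i₂ := by
    rw [(cramer U).map_smul]; simp [smul_eq_mul]
  rw [e4, e1, e2, e3 c, e3 d, e3 b] at key
  rw [hW] at key
  rw [hU, hW]
  linear_combination -key

open Matrix

namespace S6aux

noncomputable def DG {g : ℕ} (p q y : Fin g → ℂ) : ℂ :=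
  (Matrix.of fun i j : Fin g => q j ^ (i : ℕ) - y j * p j ^ (i : ℕ)).det

noncomputable def NN {g : ℕ} (p q a : Fin g → ℂ) (z u : ℂ) :
    Matrix (Fin (2 + g)) (Fin (2 + g)) ℂ :=
  Matrix.of fun i j =>
    Sum.elim (fun r : Fin 2 => if r = 0 then z ^ (i : ℕ) else u ^ (i : ℕ))
      (fun jj : Fin g => q jj ^ (i : ℕ) - a jj * p jj ^ (i : ℕ))
      (finSumFinEquiv.symm j)

noncomputable def TT (g : ℕ) (z u : ℂ) : Matrix (Fin (2 + g)) (Fin (2 + g)) ℂ :=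
  Matrix.of fun i k =>
    Sum.elim (fun r : Fin 2 => if (k : ℕ) = (r : ℕ) then 1 else 0)
      (fun ii : Fin g =>
        (if (k : ℕ) = (ii : ℕ) then z * u else 0)
        + (if (k : ℕ) = (ii : ℕ) + 1 then -(z + u) else 0)
        + (if (k : ℕ) = (ii : ℕ) + 2 then 1 else 0))
      (finSumFinEquiv.symm i)

lemma val_e_inl {g : ℕ} (r : Fin 2) : ((finSumFinEquiv (Sum.inl r) : Fin (2 + g)) : ℕ) = (r : ℕ) := by
  simp [finSumFinEquiv_apply_left]

lemma val_e_inr {g : ℕ} (ii : Fin g) :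
    ((finSumFinEquiv (Sum.inr ii) : Fin (2 + g)) : ℕ) = 2 + (ii : ℕ) := by
  simp [finSumFinEquiv_apply_right]

lemma det_TT (g : ℕ) (z u : ℂ) : (TT g z u).det = 1 := by
  have htri : (TT g z u).BlockTriangular OrderDual.toDual := by
    intro i k hik
    have hv : (i : ℕ) < (k : ℕ) := hik
    simp only [TT, Matrix.of_apply]
    rcases hsi : finSumFinEquiv.symm i with r | ii
    · have : (i : ℕ) = (r : ℕ) := by
        have : i = finSumFinEquiv (Sum.inl r) := by rw [← hsi]; simp
        rw [this, val_e_inl]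
      simp only [Sum.elim_inl]
      rw [if_neg (by omega)]
    · have : (i : ℕ) = 2 + (ii : ℕ) := by
        have : i = finSumFinEquiv (Sum.inr ii) := by rw [← hsi]; simp
        rw [this, val_e_inr]
      simp only [Sum.elim_inr]
      rw [if_neg (by omega), if_neg (by omega), if_neg (by omega)]
      ring
  rw [Matrix.det_of_lowerTriangular _ htri]
  apply Finset.prod_eq_one
  intro i _
  simp only [TT, Matrix.of_apply]
  rcases hsi : finSumFinEquiv.symm i with r | ii
  · have hval : (i : ℕ) = (r : ℕ) := by
      have : i = finSumFinEquiv (Sum.inl r) := by rw [← hsi]; simp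
      rw [this, val_e_inl]
    simp [hval]
  · have hval : (i : ℕ) = 2 + (ii : ℕ) := by
      have : i = finSumFinEquiv (Sum.inr ii) := by rw [← hsi]; simp
      rw [this, val_e_inr]
    simp only [Sum.elim_inr]
    rw [if_neg (by omega), if_neg (by omega), if_pos (by omega)]
    ring

lemma sum_ite_val {n : ℕ} {m : ℕ} (hm : m < n) (c : ℂ) (f : Fin n → ℂ) :
    (∑ k : Fin n, (if (k : ℕ) = m then c else 0) * f k) = c * f ⟨m, hm⟩ := by
  rw [Finset.sum_eq_single (⟨m, hm⟩ : Fin n)]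
  · simp
  · intro k _ hk
    have : (k : ℕ) ≠ m := fun h => hk (Fin.ext h)
    simp [this]
  · simp

lemma NN_row_val {g : ℕ} (p q a : Fin g → ℂ) (z u : ℂ) (i i' : Fin (2 + g))
    (h : (i : ℕ) = (i' : ℕ)) (j : Fin (2 + g)) :
    NN p q a z u i j = NN p q a z u i' j := by
  simp only [NN, Matrix.of_apply]
  rcases finSumFinEquiv.symm j with r | jj
  · fin_cases r <;> simp [h]
  · simp [h]

lemma TN_block {g : ℕ} (p q a : Fin g → ℂ) (z u : ℂ) :
    (TT g z u * NN p q a z u).submatrix finSumFinEquiv finSumFinEquiv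
    = Matrix.fromBlocks (!![1, 1; z, u])
        (Matrix.of fun (r : Fin 2) (j : Fin g) =>
          if r = 0 then 1 - a j else q j - a j * p j)
        0
        (Matrix.of fun i j : Fin g =>
          q j ^ (i : ℕ) * ((q j - z) * (q j - u))
            - a j * p j ^ (i : ℕ) * ((p j - z) * (p j - u))) := by
  ext i j
  rcases i with r | ii
  · -- rows of the Fin 2 block
    have hrow : ∀ k, TT g z u (finSumFinEquiv (Sum.inl r)) k
        = if (k : ℕ) = (r : ℕ) then 1 else 0 := by
      intro k; simp only [TT, Matrix.of_apply, Equiv.symm_apply_apply, Sum.elim_inl]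
    have hsum : (TT g z u * NN p q a z u) (finSumFinEquiv (Sum.inl r)) (finSumFinEquiv j)
        = NN p q a z u ⟨(r : ℕ), by omega⟩ (finSumFinEquiv j) := by
      rw [Matrix.mul_apply]
      simp only [hrow]
      rw [sum_ite_val (by omega : (r:ℕ) < 2 + g), one_mul]
    rw [Matrix.submatrix_apply, hsum]
    rcases j with s | jj
    · -- 2x2 block
      simp only [Matrix.fromBlocks_apply₁₁, NN, Matrix.of_apply, Equiv.symm_apply_apply,
        Sum.elim_inl]
      fin_cases r <;> fin_cases s <;> simp
    · simp only [Matrix.fromBlocks_apply₁₂, NN, Matrix.of_apply, Equiv.symm_apply_apply,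
        Sum.elim_inr]
      fin_cases r <;> simp
  · -- rows of the Fin g block
    have hrow : ∀ k, TT g z u (finSumFinEquiv (Sum.inr ii)) k
        = (if (k : ℕ) = (ii : ℕ) then z * u else 0)
          + (if (k : ℕ) = (ii : ℕ) + 1 then -(z + u) else 0)
          + (if (k : ℕ) = (ii : ℕ) + 2 then 1 else 0) := by
      intro k; simp only [TT, Matrix.of_apply, Equiv.symm_apply_apply, Sum.elim_inr]
    have hii : (ii : ℕ) < 2 + g := by omega
    have hii1 : (ii : ℕ) + 1 < 2 + g := by omega
    have hii2 : (ii : ℕ) + 2 < 2 + g := by omega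
    have hsum : (TT g z u * NN p q a z u) (finSumFinEquiv (Sum.inr ii)) (finSumFinEquiv j)
        = z * u * NN p q a z u ⟨(ii : ℕ), hii⟩ (finSumFinEquiv j)
          + (-(z + u)) * NN p q a z u ⟨(ii : ℕ) + 1, hii1⟩ (finSumFinEquiv j)
          + 1 * NN p q a z u ⟨(ii : ℕ) + 2, hii2⟩ (finSumFinEquiv j) := by
      rw [Matrix.mul_apply]
      simp only [hrow, add_mul]
      rw [Finset.sum_add_distrib, Finset.sum_add_distrib,
        sum_ite_val hii, sum_ite_val hii1, sum_ite_val hii2]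
    rw [Matrix.submatrix_apply, hsum]
    rcases j with s | jj
    · simp only [Matrix.fromBlocks_apply₂₁, Matrix.zero_apply, NN, Matrix.of_apply,
        Equiv.symm_apply_apply, Sum.elim_inl]
      fin_cases s <;> simp <;> ring
    · simp only [Matrix.fromBlocks_apply₂₂, NN, Matrix.of_apply, Equiv.symm_apply_apply,
        Sum.elim_inr]
      ring

lemma det_NN {g : ℕ} (p q a y : Fin g → ℂ) (z u : ℂ)
    (hy : ∀ j, y j * ((z - q j) * (u - q j)) = a j * ((z - p j) * (u - p j))) :
    (NN p q a z u).det = (u - z) * (∏ j, (z - q j) * (u - q j)) * DG p q y := by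
  have h1 : (NN p q a z u).det = (TT g z u * NN p q a z u).det := by
    rw [Matrix.det_mul, det_TT, one_mul]
  rw [h1, ← Matrix.det_submatrix_equiv_self finSumFinEquiv, TN_block,
    Matrix.det_fromBlocks_zero₂₁, Matrix.det_fin_two_of]
  have hGm : (Matrix.of fun i j : Fin g =>
      q j ^ (i : ℕ) * ((q j - z) * (q j - u))
        - a j * p j ^ (i : ℕ) * ((p j - z) * (p j - u)))
      = Matrix.of (fun i j : Fin g => ((z - q j) * (u - q j)) *
          ((Matrix.of fun i j : Fin g => q j ^ (i : ℕ) - y j * p j ^ (i : ℕ)) i j)) := by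
    ext i j
    simp only [Matrix.of_apply]
    linear_combination (p j ^ (i : ℕ)) * hy j
  rw [hGm, Matrix.det_mul_row, DG]
  ring

end S6aux

namespace S6aux

lemma NN_update {g : ℕ} (p q a : Fin g → ℂ) (z u z' u' : ℂ) :
    ((NN p q a z u).updateCol (finSumFinEquiv (Sum.inl 0))
        (fun i => z' ^ (i : ℕ))).updateCol (finSumFinEquiv (Sum.inl 1))
        (fun i => u' ^ (i : ℕ))
      = NN p q a z' u' := by
  ext i j
  rw [Matrix.updateCol_apply, Matrix.updateCol_apply]
  by_cases h1 : j = finSumFinEquiv (Sum.inl 1)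
  · rw [if_pos h1, h1]
    simp [NN]
  · rw [if_neg h1]
    by_cases h0 : j = finSumFinEquiv (Sum.inl 0)
    · rw [if_pos h0, h0]
      simp [NN]
    · rw [if_neg h0]
      simp only [NN, Matrix.of_apply]
      rcases hsj : finSumFinEquiv.symm j with r | jj
      · exfalso
        have hj : j = finSumFinEquiv (Sum.inl r) := by
          rw [← hsj]; simp
        fin_cases r
        · exact h0 hj
        · exact h1 hj
      · simp

lemma e01_ne {g : ℕ} :
    (finSumFinEquiv (Sum.inl 0) : Fin (2 + g)) ≠ finSumFinEquiv (Sum.inl 1) := by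
  intro h
  exact (by decide : (0 : Fin 2) ≠ 1) (Sum.inl.inj (finSumFinEquiv.injective h))

end S6aux



/-- The rational limit `H` of the theta function: for amplitudes
`x = (x₀,…,x_{g−1})`,
`H(x) = det((q_j)^i − x_j (p_j)^i) / ∏_{j<i} (q_i − q_j)`. -/
noncomputable def Hdet {g : ℕ} (p q x : Fin g → ℂ) : ℂ :=
  (Matrix.of fun i j : Fin g => q j ^ (i : ℕ) - x j * p j ^ (i : ℕ)).det /
    ∏ i : Fin g, ∏ j ∈ Finset.Iio i, (q i - q j)

/-- The rational function `σ(z) = (p − z)/(q − z)`. -/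
noncomputable def sig (p q z : ℂ) : ℂ := (p - z) / (q - z)

/-- The rational Fay identity: for `g ≥ 1`, pairwise distinct
`q₀,…,q_{g−1}`, amplitudes `f`, and points `A, B, C, D` avoiding the `q`'s
(with `B, D` also avoiding the `p`'s),
`(A−D)(C−B)·H(fσ(A)/σ(B))·H(fσ(C)/σ(D)) + (A−B)(D−C)·H(fσ(A)/σ(D))·H(fσ(C)/σ(B))
 = (A−C)(D−B)·H(f)·H(fσ(A)σ(C)/(σ(B)σ(D)))`. -/
theorem statement6 (g : ℕ) (hg : 1 ≤ g) (p q : Fin g → ℂ)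
    (hq : ∀ i j : Fin g, i ≠ j → q i ≠ q j)
    (f : Fin g → ℂ) (A B C D : ℂ)
    (hA : ∀ k, A ≠ q k) (hB : ∀ k, B ≠ q k) (hC : ∀ k, C ≠ q k) (hD : ∀ k, D ≠ q k)
    (hBp : ∀ k, B ≠ p k) (hDp : ∀ k, D ≠ p k) :
    (A - D) * (C - B)
        * Hdet p q (fun k => f k * sig (p k) (q k) A / sig (p k) (q k) B)
        * Hdet p q (fun k => f k * sig (p k) (q k) C / sig (p k) (q k) D)
      + (A - B) * (D - C)
        * Hdet p q (fun k => f k * sig (p k) (q k) A / sig (p k) (q k) D)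
        * Hdet p q (fun k => f k * sig (p k) (q k) C / sig (p k) (q k) B)
      = (A - C) * (D - B) * Hdet p q f
        * Hdet p q (fun k =>
            f k * (sig (p k) (q k) A * sig (p k) (q k) C)
              / (sig (p k) (q k) B * sig (p k) (q k) D)) := by
  classical
  open S6aux in
  set a : Fin g → ℂ := fun j => f j * ((B - q j) * (D - q j)) / ((B - p j) * (D - p j)) with ha
  have hy : ∀ (z u : ℂ) (y : Fin g → ℂ),
      (∀ j, y j * ((z - q j) * (u - q j)) = a j * ((z - p j) * (u - p j))) →
      (S6aux.NN p q a z u).det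
        = (u - z) * (∏ j, (z - q j) * (u - q j)) * S6aux.DG p q y :=
    fun z u y h => S6aux.det_NN p q a y z u h
  have hP := plucker (S6aux.NN p q a 0 0) (finSumFinEquiv (Sum.inl 0))
    (finSumFinEquiv (Sum.inl 1)) S6aux.e01_ne
    (fun i => A ^ (i : ℕ)) (fun i => B ^ (i : ℕ)) (fun i => C ^ (i : ℕ)) (fun i => D ^ (i : ℕ))
  rw [S6aux.NN_update p q a 0 0 A B, S6aux.NN_update p q a 0 0 C D,
    S6aux.NN_update p q a 0 0 A C, S6aux.NN_update p q a 0 0 B D,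
    S6aux.NN_update p q a 0 0 A D, S6aux.NN_update p q a 0 0 C B] at hP
  have hne : ∀ j : Fin g, q j - A ≠ 0 ∧ q j - B ≠ 0 ∧ q j - C ≠ 0 ∧ q j - D ≠ 0 ∧
      p j - B ≠ 0 ∧ p j - D ≠ 0 ∧ B - p j ≠ 0 ∧ D - p j ≠ 0 := fun j =>
    ⟨sub_ne_zero.mpr (Ne.symm (hA j)), sub_ne_zero.mpr (Ne.symm (hB j)),
     sub_ne_zero.mpr (Ne.symm (hC j)), sub_ne_zero.mpr (Ne.symm (hD j)),
     sub_ne_zero.mpr (Ne.symm (hBp j)), sub_ne_zero.mpr (Ne.symm (hDp j)),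
     sub_ne_zero.mpr (hBp j), sub_ne_zero.mpr (hDp j)⟩
  have dAB := hy A B (fun k => f k * sig (p k) (q k) A / sig (p k) (q k) D) (by
    intro j
    obtain ⟨h1, h2, h3, h4, h5, h6, h7, h8⟩ := hne j
    simp only [ha, sig]
    field_simp
    ring)
  have dCD := hy C D (fun k => f k * sig (p k) (q k) C / sig (p k) (q k) B) (by
    intro j
    obtain ⟨h1, h2, h3, h4, h5, h6, h7, h8⟩ := hne j
    simp only [ha, sig]
    field_simp
    ring)
  have dAC := hy A C (fun k =>
      f k * (sig (p k) (q k) A * sig (p k) (q k) C)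
        / (sig (p k) (q k) B * sig (p k) (q k) D)) (by
    intro j
    obtain ⟨h1, h2, h3, h4, h5, h6, h7, h8⟩ := hne j
    simp only [ha, sig]
    field_simp
    ring)
  have dBD := hy B D f (by
    intro j
    obtain ⟨h1, h2, h3, h4, h5, h6, h7, h8⟩ := hne j
    simp only [ha, sig]
    field_simp)
  have dAD := hy A D (fun k => f k * sig (p k) (q k) A / sig (p k) (q k) B) (by
    intro j
    obtain ⟨h1, h2, h3, h4, h5, h6, h7, h8⟩ := hne j
    simp only [ha, sig]
    field_simp
    ring)
  have dCB := hy C B (fun k => f k * sig (p k) (q k) C / sig (p k) (q k) D) (by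
    intro j
    obtain ⟨h1, h2, h3, h4, h5, h6, h7, h8⟩ := hne j
    simp only [ha, sig]
    field_simp
    ring)
  rw [dAB, dCD, dAC, dBD, dAD, dCB] at hP
  simp only [Finset.prod_mul_distrib] at hP
  have hPA : (∏ j, (A - q j)) ≠ 0 :=
    Finset.prod_ne_zero_iff.mpr (fun j _ => sub_ne_zero.mpr (hA j))
  have hPB : (∏ j, (B - q j)) ≠ 0 :=
    Finset.prod_ne_zero_iff.mpr (fun j _ => sub_ne_zero.mpr (hB j))
  have hPC : (∏ j, (C - q j)) ≠ 0 :=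
    Finset.prod_ne_zero_iff.mpr (fun j _ => sub_ne_zero.mpr (hC j))
  have hPD : (∏ j, (D - q j)) ≠ 0 :=
    Finset.prod_ne_zero_iff.mpr (fun j _ => sub_ne_zero.mpr (hD j))
  have hfin :
      (A - D) * (C - B)
          * (S6aux.DG p q (fun k => f k * sig (p k) (q k) A / sig (p k) (q k) B)
            * S6aux.DG p q (fun k => f k * sig (p k) (q k) C / sig (p k) (q k) D))
        + (A - B) * (D - C)
          * (S6aux.DG p q (fun k => f k * sig (p k) (q k) A / sig (p k) (q k) D)
            * S6aux.DG p q (fun k => f k * sig (p k) (q k) C / sig (p k) (q k) B))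
      = (A - C) * (D - B)
          * (S6aux.DG p q f
            * S6aux.DG p q (fun k =>
                f k * (sig (p k) (q k) A * sig (p k) (q k) C)
                  / (sig (p k) (q k) B * sig (p k) (q k) D))) := by
    apply mul_left_cancel₀
      (mul_ne_zero (mul_ne_zero (mul_ne_zero hPA hPB) hPC) hPD)
    linear_combination (-1 : ℂ) * hP
  have hH : ∀ x : Fin g → ℂ, Hdet p q x
      = S6aux.DG p q x / (∏ i : Fin g, ∏ j ∈ Finset.Iio i, (q i - q j)) := fun _ => rfl
  rw [hH, hH, hH, hH, hH, hH]
  linear_combination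
    ((∏ i : Fin g, ∏ j ∈ Finset.Iio i, (q i - q j))⁻¹
      * (∏ i : Fin g, ∏ j ∈ Finset.Iio i, (q i - q j))⁻¹) * hfin
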